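/- With S = 2π the area of the unit cylinder (radius 1, height 1) and S̄ = 4NM·Ā_pqr the total area of the Schwarz lantern triangulation, it holds that 4π⁴/(3N²) − (4π⁶/(45N⁴))·(2 + 45M²) < S² − S̄² < 4π⁴/(3N²). -/

import Mathlib

open Real Filter Asymptotics

/-- Squared Euclidean distance between two points of `ℝ³`. -/
noncomputable def distSq (a b : Fin 3 → ℝ) : ℝ :=
  (a 0 - b 0) ^ 2 + (a 1 - b 1) ^ 2 + (a 2 - b 2) ^ 2

/-- Euclidean inner product on `ℝ³`. -/
noncomputable def inner3 (a b : Fin 3 → ℝ) : ℝ :=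
  a 0 * b 0 + a 1 * b 1 + a 2 * b 2

/-- Euclidean area of the triangle with vertices `a b c` in `ℝ³`
(half the norm of the cross product of two edge vectors). -/
noncomputable def triArea (a b c : Fin 3 → ℝ) : ℝ :=
  (1 / 2) * Real.sqrt
    (((b 1 - a 1) * (c 2 - a 2) - (b 2 - a 2) * (c 1 - a 1)) ^ 2 +
     ((b 2 - a 2) * (c 0 - a 0) - (b 0 - a 0) * (c 2 - a 2)) ^ 2 +
     ((b 0 - a 0) * (c 1 - a 1) - (b 1 - a 1) * (c 0 - a 0)) ^ 2)

/-- Vertex `p = (1,0,0)` of a typical Schwarz-lantern triangle. -/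
noncomputable def vecP : Fin 3 → ℝ := ![1, 0, 0]

/-- Vertex `q = (cos(π/N), sin(π/N), 1/(2M))` of a typical Schwarz-lantern triangle. -/
noncomputable def vecQ (N M : ℝ) : Fin 3 → ℝ := ![Real.cos (π / N), Real.sin (π / N), 1 / (2 * M)]

/-- Vertex `r = (cos(2π/N), sin(2π/N), 0)` of a typical Schwarz-lantern triangle. -/
noncomputable def vecR (N : ℝ) : Fin 3 → ℝ := ![Real.cos (2 * π / N), Real.sin (2 * π / N), 0]

/-- Outward unit normal of the unit cylinder `x² + y² = 1` at a point `(x,y,z)`. -/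
noncomputable def cylNormal (v : Fin 3 → ℝ) : Fin 3 → ℝ := ![v 0, v 1, 0]

private lemma nonneg_of_deriv' (f f' : ℝ → ℝ) (hf : ∀ x, HasDerivAt f (f' x) x)
    (h0 : f 0 = 0) (hf' : ∀ x, 0 ≤ x → 0 ≤ f' x) : ∀ x, 0 ≤ x → 0 ≤ f x := by
  intro x hx
  have hmono : MonotoneOn f (Set.Ici 0) := by
    apply monotoneOn_of_deriv_nonneg (convex_Ici 0)
    · exact fun y _ => (hf y).continuousAt.continuousWithinAt
    · intro y hy
      exact (hf y).differentiableAt.differentiableWithinAt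
    · intro y hy
      rw [interior_Ici] at hy
      rw [(hf y).deriv]
      exact hf' y (le_of_lt hy)
  have := hmono Set.self_mem_Ici (Set.mem_Ici.mpr hx) hx
  rwa [h0] at this

private lemma sin_ge_cubic' (x : ℝ) (hx : 0 ≤ x) : x - x ^ 3 / 6 ≤ sin x := by
  have h := nonneg_of_deriv' (fun y => sin y - (y - y ^ 3 / 6))
      (fun y => cos y - (1 - y ^ 2 / 2)) ?_ (by norm_num) ?_ x hx
  · linarith
  · intro y
    have h1 : HasDerivAt (fun y : ℝ => y - y ^ 3 / 6) (1 - 3 * y ^ 2 / 6) y := by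
      have := ((hasDerivAt_pow 3 y).div_const 6)
      have h : HasDerivAt (fun y : ℝ => y - y ^ 3 / 6) _ y := (hasDerivAt_id' y).sub this
      simpa using h
    have : HasDerivAt (fun y => sin y - (y - y ^ 3 / 6)) _ y := (Real.hasDerivAt_sin y).sub h1
    convert this using 1; ring
  · intro y hy
    have := Real.one_sub_sq_div_two_le_cos (x := y)
    linarith

private lemma cos_le_quartic' (x : ℝ) (hx : 0 ≤ x) : cos x ≤ 1 - x ^ 2 / 2 + x ^ 4 / 24 := by
  have h := nonneg_of_deriv' (fun y => (1 - y ^ 2 / 2 + y ^ 4 / 24) - cos y)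
      (fun y => sin y - (y - y ^ 3 / 6)) ?_ (by norm_num) ?_ x hx
  · linarith
  · intro y
    have h1 : HasDerivAt (fun y : ℝ => 1 - y ^ 2 / 2 + y ^ 4 / 24)
        (-(2 * y / 2) + 4 * y ^ 3 / 24) y := by
      have h2 := ((hasDerivAt_pow 2 y).div_const 2)
      have h3 := ((hasDerivAt_pow 4 y).div_const 24)
      have h : HasDerivAt (fun y : ℝ => 1 - y ^ 2 / 2 + y ^ 4 / 24) _ y :=
        ((hasDerivAt_const y (1:ℝ)).sub h2).add h3
      simpa using h
    have : HasDerivAt (fun y => (1 - y ^ 2 / 2 + y ^ 4 / 24) - cos y) _ y :=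
      h1.sub (Real.hasDerivAt_cos y)
    convert this using 1; ring
  · intro y hy
    linarith [sin_ge_cubic' y hy]

private lemma sin_le_quintic' (x : ℝ) (hx : 0 ≤ x) :
    sin x ≤ x - x ^ 3 / 6 + x ^ 5 / 120 := by
  have h := nonneg_of_deriv' (fun y => (y - y ^ 3 / 6 + y ^ 5 / 120) - sin y)
      (fun y => (1 - y ^ 2 / 2 + y ^ 4 / 24) - cos y) ?_ (by norm_num) ?_ x hx
  · linarith
  · intro y
    have h1 : HasDerivAt (fun y : ℝ => y - y ^ 3 / 6 + y ^ 5 / 120)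
        (1 - 3 * y ^ 2 / 6 + 5 * y ^ 4 / 120) y := by
      have h2 := ((hasDerivAt_pow 3 y).div_const 6)
      have h3 := ((hasDerivAt_pow 5 y).div_const 120)
      have h : HasDerivAt (fun y : ℝ => y - y ^ 3 / 6 + y ^ 5 / 120) _ y :=
        ((hasDerivAt_id' y).sub h2).add h3
      simpa using h
    have : HasDerivAt (fun y => (y - y ^ 3 / 6 + y ^ 5 / 120) - sin y) _ y :=
      h1.sub (Real.hasDerivAt_sin y)
    convert this using 1; ring
  · intro y hy
    linarith [cos_le_quartic' y hy]

private lemma core_ineq' (x m : ℝ) (hx : 0 < x) (hx1 : x ≤ 1) (hm : 1 ≤ m) :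
    x ^ 4 / 3 - (2 / 45) * x ^ 6 - m ^ 2 * x ^ 6
        < x ^ 2 - sin x ^ 2 - 4 * m ^ 2 * sin x ^ 2 * (1 - cos x) ^ 2 ∧
      x ^ 2 - sin x ^ 2 - 4 * m ^ 2 * sin x ^ 2 * (1 - cos x) ^ 2 < x ^ 4 / 3 := by
  have hs1 := sin_ge_cubic' x hx.le
  have hs2 := sin_le_quintic' x hx.le
  have hs3 := Real.sin_lt hx
  have hc1 := Real.one_sub_sq_div_two_le_cos (x := x)
  have hspos : 0 < sin x := by nlinarith
  have hc2 : cos x < 1 := by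
    nlinarith [Real.sin_sq_add_cos_sq x]
  have h1c : 0 < 1 - cos x := by linarith
  have h1c2 : 1 - cos x ≤ x ^ 2 / 2 := by linarith
  constructor
  · -- lower bound
    have h108 : x ^ 10 ≤ x ^ 8 := pow_le_pow_of_le_one hx.le hx1 (by norm_num)
    have hsq : sin x ^ 2 ≤ x ^ 2 - x ^ 4 / 3 + (2 / 45) * x ^ 6 := by
      nlinarith [hs2, hspos, h108, sq_nonneg (x ^ 4)]
    have hg : 4 * m ^ 2 * sin x ^ 2 * (1 - cos x) ^ 2 < m ^ 2 * x ^ 6 := by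
      have h64 : x ^ 6 ≤ x ^ 4 := by
        have := pow_le_pow_of_le_one hx.le hx1 (show 4 ≤ 6 by norm_num)
        linarith
      have hx40 : (0:ℝ) ≤ x ^ 4 := by positivity
      have hs4 : sin x ^ 2 ≤ x ^ 2 - x ^ 4 / 4 := by linarith
      have hcc : (1 - cos x) ^ 2 ≤ x ^ 4 / 4 := by nlinarith
      have hx4 : (0:ℝ) ≤ x ^ 2 - x ^ 4 / 4 := by nlinarith [h64, pow_pos hx 4, sq_nonneg x]
      have hmm : (0:ℝ) < m ^ 2 := by nlinarith
      have e1 : sin x ^ 2 * (1 - cos x) ^ 2 ≤ (x ^ 2 - x ^ 4 / 4) * (x ^ 4 / 4) :=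
        mul_le_mul hs4 hcc (sq_nonneg _) hx4
      have e2 := mul_le_mul_of_nonneg_left e1 (by positivity : (0:ℝ) ≤ 4 * m ^ 2)
      nlinarith [e2, mul_pos hmm (pow_pos hx 8)]
    linarith
  · -- upper bound
    have h31 : x ^ 3 ≤ x := by
      have := pow_le_pow_of_le_one hx.le hx1 (show 1 ≤ 3 by norm_num)
      simpa using this
    have h0 : 0 ≤ x - x ^ 3 / 6 := by linarith
    have hsq : x ^ 2 - x ^ 4 / 3 ≤ sin x ^ 2 := by
      nlinarith [hs1, h0, sq_nonneg (x ^ 3)]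
    have hg : 0 < 4 * m ^ 2 * sin x ^ 2 * (1 - cos x) ^ 2 := by positivity
    linarith

private lemma triArea_eq' (N M : ℝ) :
    triArea vecP (vecQ N M) (vecR N) =
      (1 / 2) * Real.sqrt ((2 * Real.sin (π / N)) ^ 2 *
        ((1 / (2 * M)) ^ 2 + (1 - Real.cos (π / N)) ^ 2)) := by
  rw [triArea]
  simp only [vecP, vecQ, vecR, Matrix.cons_val_zero, Matrix.cons_val_one, Matrix.head_cons,
    Matrix.cons_val_two, Matrix.tail_cons]
  rw [show 2 * π / N = 2 * (π / N) by ring, Real.cos_two_mul, Real.sin_two_mul]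
  congr 1
  refine congrArg Real.sqrt ?_
  linear_combination ((Real.cos (π / N)) ^ 2 - 1) / M ^ 2 * (Real.sin_sq_add_cos_sq (π / N))

/-- with `S = 2π` the cylinder area and `S̄ = 4NM·Ā_pqr` the total Schwarz
lantern area, `4π⁴/(3N²) − (4π⁶/(45N⁴))(2 + 45M²) < S² − S̄² < 4π⁴/(3N²)` for all `M ≥ 1`
and all sufficiently large `N`. -/
theorem schwarz_total_area_error_bounds :
    ∃ N₀ : ℕ, ∀ N M : ℕ, N₀ ≤ N → 1 ≤ M →
      let Sbar : ℝ := 4 * N * M * triArea vecP (vecQ N M) (vecR N)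
      4 * π ^ 4 / (3 * N ^ 2) - (4 * π ^ 6 / (45 * N ^ 4)) * (2 + 45 * M ^ 2)
          < (2 * π) ^ 2 - Sbar ^ 2 ∧
      (2 * π) ^ 2 - Sbar ^ 2 < 4 * π ^ 4 / (3 * N ^ 2) := by
  refine ⟨4, fun N M hN hM => ?_⟩
  intro Sbar
  have hn4 : (4:ℝ) ≤ (N:ℝ) := by exact_mod_cast hN
  have hm1 : (1:ℝ) ≤ (M:ℝ) := by exact_mod_cast hM
  have hn0 : (0:ℝ) < (N:ℝ) := by linarith
  have hne : (N:ℝ) ≠ 0 := ne_of_gt hn0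
  have hm0 : (0:ℝ) < (M:ℝ) := by linarith
  have hMne : (M:ℝ) ≠ 0 := ne_of_gt hm0
  have hx : 0 < π / (N:ℝ) := by positivity
  have hx1 : π / (N:ℝ) ≤ 1 := by
    rw [div_le_one hn0]
    linarith [Real.pi_le_four]
  have key := core_ineq' (π / (N:ℝ)) (M:ℝ) hx hx1 hm1
  have hE0 : (0:ℝ) ≤ (2 * Real.sin (π / (N:ℝ))) ^ 2 *
      ((1 / (2 * (M:ℝ))) ^ 2 + (1 - Real.cos (π / (N:ℝ))) ^ 2) := by positivity
  have hS : Sbar ^ 2 = 4 * (N:ℝ) ^ 2 * (sin (π / (N:ℝ)) ^ 2 +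
      4 * (M:ℝ) ^ 2 * sin (π / (N:ℝ)) ^ 2 * (1 - cos (π / (N:ℝ))) ^ 2) := by
    show (4 * (N:ℝ) * (M:ℝ) * triArea vecP (vecQ N M) (vecR N)) ^ 2 = _
    rw [triArea_eq' (N:ℝ) (M:ℝ)]
    rw [show (4 * (N:ℝ) * (M:ℝ) * ((1 / 2) * Real.sqrt ((2 * Real.sin (π / (N:ℝ))) ^ 2 *
        ((1 / (2 * (M:ℝ))) ^ 2 + (1 - Real.cos (π / (N:ℝ))) ^ 2)))) ^ 2 =
        4 * (N:ℝ) ^ 2 * (M:ℝ) ^ 2 * (Real.sqrt ((2 * Real.sin (π / (N:ℝ))) ^ 2 *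
        ((1 / (2 * (M:ℝ))) ^ 2 + (1 - Real.cos (π / (N:ℝ))) ^ 2))) ^ 2 by ring]
    rw [Real.sq_sqrt hE0]
    field_simp
    ring
  have h4n : (0:ℝ) < 4 * (N:ℝ) ^ 2 := by positivity
  constructor
  · have hmul := mul_lt_mul_of_pos_left key.1 h4n
    have expand1 : 4 * π ^ 4 / (3 * (N:ℝ) ^ 2) - (4 * π ^ 6 / (45 * (N:ℝ) ^ 4)) * (2 + 45 * (M:ℝ) ^ 2)
        = 4 * (N:ℝ) ^ 2 * ((π / (N:ℝ)) ^ 4 / 3 - (2 / 45) * (π / (N:ℝ)) ^ 6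
          - (M:ℝ) ^ 2 * (π / (N:ℝ)) ^ 6) := by
      field_simp
      ring
    have expand2 : (2 * π) ^ 2 - 4 * (N:ℝ) ^ 2 * (sin (π / (N:ℝ)) ^ 2 +
        4 * (M:ℝ) ^ 2 * sin (π / (N:ℝ)) ^ 2 * (1 - cos (π / (N:ℝ))) ^ 2)
        = 4 * (N:ℝ) ^ 2 * ((π / (N:ℝ)) ^ 2 - sin (π / (N:ℝ)) ^ 2
          - 4 * (M:ℝ) ^ 2 * sin (π / (N:ℝ)) ^ 2 * (1 - cos (π / (N:ℝ))) ^ 2) := by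
      field_simp
      ring
    rw [hS, expand1, expand2]
    exact hmul
  · have hmul := mul_lt_mul_of_pos_left key.2 h4n
    have expand1 : 4 * π ^ 4 / (3 * (N:ℝ) ^ 2) = 4 * (N:ℝ) ^ 2 * ((π / (N:ℝ)) ^ 4 / 3) := by
      field_simp
    have expand2 : (2 * π) ^ 2 - 4 * (N:ℝ) ^ 2 * (sin (π / (N:ℝ)) ^ 2 +
        4 * (M:ℝ) ^ 2 * sin (π / (N:ℝ)) ^ 2 * (1 - cos (π / (N:ℝ))) ^ 2)
        = 4 * (N:ℝ) ^ 2 * ((π / (N:ℝ)) ^ 2 - sin (π / (N:ℝ)) ^ 2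
          - 4 * (M:ℝ) ^ 2 * sin (π / (N:ℝ)) ^ 2 * (1 - cos (π / (N:ℝ))) ^ 2) := by
      field_simp
      ring
    rw [hS, expand2, expand1]
    exact hmul
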